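/- arXiv:2408.02029 — 6 statements merged into one kernel-verified Lean document; each statement's English description precedes it below -/
import Mathlib

section
/- Let p = ⟨A₀, ℓ₀, …, ℓ_{n−1}, A_n⟩ and p′ = ⟨A₀′, ℓ₀′, …, ℓ_{n−1}′, A_n′⟩ be simple path patterns of the same length n in a property graph G with ℓ_i′ = ℓ_i for all 0 ≤ i ≤ n−1 and A_i ⊆ A_i′ for all 0 ≤ i ≤ n. Then V(p′) ⊆ V(p); consequently, for any positive integer θ, if p is infrequent (|V(p)| < θ), then p′ is also infrequent (|V(p′)| < θ). -/
/-- A property graph: directed edges labeled by `L`, vertices carrying attribute sets over `Att`. -/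
structure PropertyGraph (V L Att : Type) where
  E : Set (V × L × V)
  attr : V → Set Att

/-- A simple path pattern of length `n`: `n+1` nonempty attribute sets and `n` edge labels. -/
structure PathPattern (L Att : Type) (n : ℕ) where
  A : Fin (n + 1) → Set Att
  A_nonempty : ∀ i, (A i).Nonempty
  lab : Fin n → L

namespace PropertyGraph

variable {V L Att : Type}

/-- Vertex `s` matches pattern `p` if it is the source of a path matching `p`. -/
def Matches (G : PropertyGraph V L Att) {n : ℕ} (p : PathPattern L Att n) (s : V) : Prop :=
  ∃ v : Fin (n + 1) → V,
    v 0 = s ∧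
    (∀ i : Fin n, (v i.castSucc, p.lab i, v i.succ) ∈ G.E) ∧
    (∀ i : Fin (n + 1), p.A i ⊆ G.attr (v i))

/-- `V(p)`: the set of vertices matching pattern `p`. -/
def Vmatch (G : PropertyGraph V L Att) {n : ℕ} (p : PathPattern L Att n) : Set V :=
  {s | G.Matches p s}

/-- `E(A, ℓ)`: edges with label `l` whose target's attribute set covers `S`. -/
def edgesTo (G : PropertyGraph V L Att) (S : Set Att) (l : L) : Set (V × L × V) :=
  {e ∈ G.E | e.2.1 = l ∧ S ⊆ G.attr e.2.2}

/-- `V(A, ℓ)`: vertices whose attribute set covers `S` having an outgoing `l`-labeled edge. -/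
def srcVerts (G : PropertyGraph V L Att) (S : Set Att) (l : L) : Set V :=
  {v | S ⊆ G.attr v ∧ ∃ w, (v, l, w) ∈ G.E}

/-- In-degree of a vertex `w`. -/
noncomputable def inDeg (G : PropertyGraph V L Att) (w : V) : ℕ :=
  {e ∈ G.E | e.2.2 = w}.ncard

/-- `d_m`: the maximum in-degree over all vertices. -/
noncomputable def maxInDeg (G : PropertyGraph V L Att) [Fintype V] : ℕ :=
  Finset.univ.sup fun w => G.inDeg w

/-- Vertex `s` matches the reachability path pattern `⟨A₀, l*, A₁⟩`. -/
def ReachMatches (G : PropertyGraph V L Att) (A₀ A₁ : Set Att) (l : L) (s : V) : Prop :=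
  ∃ n : ℕ, 1 ≤ n ∧ ∃ v : Fin (n + 1) → V,
    v 0 = s ∧
    (∀ i : Fin n, (v i.castSucc, l, v i.succ) ∈ G.E) ∧
    A₀ ⊆ G.attr s ∧ A₁ ⊆ G.attr (v (Fin.last n))

/-- The set of vertices matching the reachability path pattern `⟨A₀, l*, A₁⟩`. -/
def VreachMatch (G : PropertyGraph V L Att) (A₀ A₁ : Set Att) (l : L) : Set V :=
  {s | G.ReachMatches A₀ A₁ l s}

end PropertyGraph

open PropertyGraph in
/-- Same-length patterns with equal labels and pointwise larger attribute sets
match fewer vertices (V(p') ⊆ V(p)); hence infrequency of p propagates to p'. -/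
theorem attr_superset_antimonotone {V L Att : Type} [Fintype V] (G : PropertyGraph V L Att)
    {n : ℕ} (p p' : PathPattern L Att n)
    (hlab : ∀ i : Fin n, p'.lab i = p.lab i)
    (hA : ∀ i : Fin (n + 1), p.A i ⊆ p'.A i) :
    G.Vmatch p' ⊆ G.Vmatch p ∧
      ∀ θ : ℕ, 0 < θ → (G.Vmatch p).ncard < θ → (G.Vmatch p').ncard < θ := by
  have hsub : G.Vmatch p' ⊆ G.Vmatch p := by
    rintro s ⟨v, h0, he, ha⟩
    exact ⟨v, h0, fun i => hlab i ▸ he i, fun i => (hA i).trans (ha i)⟩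
  refine ⟨hsub, fun θ _ h => lt_of_le_of_lt ?_ h⟩
  exact Set.ncard_le_ncard hsub (Set.toFinite _)
end

section
/- Let G be a finite property graph, let i ≥ 1, let ℓ be an edge label, and let A be a nonempty attribute set. For every simple path pattern p of length i whose last label ℓ_{i−1} equals ℓ and whose last attribute set A_i equals A, the number of vertices matching p satisfies |V(p)| ≤ |E(A, ℓ)| · d_m^{i−1}, where d_m is the maximum in-degree in G. -/
section Aux

variable {V L Att : Type}

open PropertyGraph

/-- The tail of a pattern: drop the first attribute set and first label. -/
def PathPattern.tail {n : ℕ} (p : PathPattern L Att (n + 1)) : PathPattern L Att n where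
  A j := p.A j.succ
  A_nonempty j := p.A_nonempty j.succ
  lab j := p.lab j.succ

lemma matches_tail {G : PropertyGraph V L Att} {n : ℕ} {p : PathPattern L Att (n + 1)}
    {v : Fin (n + 2) → V}
    (hE : ∀ i : Fin (n + 1), (v i.castSucc, p.lab i, v i.succ) ∈ G.E)
    (hA : ∀ i : Fin (n + 2), p.A i ⊆ G.attr (v i)) :
    G.Matches p.tail (v 1) := by
  refine ⟨fun j => v j.succ, ?_, ?_, ?_⟩
  · simp
  · intro j
    have h := hE j.succ
    show (v j.castSucc.succ, p.lab j.succ, v j.succ.succ) ∈ G.E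
    simp only [Fin.succ_castSucc] at h ⊢
    exact h
  · intro j
    exact hA j.succ

/-- Counting edgess into a set of targets. -/
lemma card_edges_into_le {V L Att : Type} [Fintype V] [Fintype L]
    (G : PropertyGraph V L Att) (T : Set V) :
    {e : V × L × V | e ∈ G.E ∧ e.2.2 ∈ T}.ncard ≤ T.ncard * G.maxInDeg := by
  classical
  have hsub : {e : V × L × V | e ∈ G.E ∧ e.2.2 ∈ T}.toFinset ⊆
      T.toFinset.biUnion (fun w => {e ∈ G.E | e.2.2 = w}.toFinset) := by
    intro e he
    simp only [Set.mem_toFinset, Set.mem_setOf_eq] at he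
    simp only [Finset.mem_biUnion, Set.mem_toFinset, Set.mem_setOf_eq]
    exact ⟨e.2.2, he.2, he.1, rfl⟩
  have hdeg : ∀ w ∈ T.toFinset, ({e ∈ G.E | e.2.2 = w}.toFinset).card ≤ G.maxInDeg := by
    intro w _
    have : G.inDeg w ≤ G.maxInDeg := Finset.le_sup (Finset.mem_univ w)
    rwa [inDeg, Set.ncard_eq_toFinset_card'] at this
  calc {e : V × L × V | e ∈ G.E ∧ e.2.2 ∈ T}.ncard
      = ({e : V × L × V | e ∈ G.E ∧ e.2.2 ∈ T}.toFinset).card :=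
        Set.ncard_eq_toFinset_card' _
    _ ≤ (T.toFinset.biUnion (fun w => {e ∈ G.E | e.2.2 = w}.toFinset)).card :=
        Finset.card_le_card hsub
    _ ≤ ∑ w ∈ T.toFinset, ({e ∈ G.E | e.2.2 = w}.toFinset).card :=
        Finset.card_biUnion_le
    _ ≤ T.toFinset.card * G.maxInDeg := Finset.sum_le_card_nsmul _ _ _ hdeg
    _ = T.ncard * G.maxInDeg := by rw [Set.ncard_eq_toFinset_card']

lemma bound_aux {V L Att : Type} [Fintype V] [Fintype L] (G : PropertyGraph V L Att)
    (l : L) (S : Set Att) :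
    ∀ (n : ℕ) (p : PathPattern L Att (n + 1)),
      p.lab (Fin.last n) = l → p.A (Fin.last (n + 1)) = S →
      (G.Vmatch p).ncard ≤ (G.edgesTo S l).ncard * G.maxInDeg ^ n := by
  classical
  intro n
  induction n with
  | zero =>
    intro p hlab hA
    simp only [pow_zero, mul_one]
    refine Set.ncard_le_ncard_of_injOn
      (fun s => if h : G.Matches p s then (s, l, h.choose 1) else (s, l, s)) ?_ ?_
      (Set.toFinite _)
    · intro s hs
      have h : G.Matches p s := hs
      simp only [dif_pos h]
      obtain ⟨h0, hE, hAttr⟩ := h.choose_spec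
      have hedge := hE 0
      have hc : (0 : Fin 1).castSucc = 0 := rfl
      have hsuc : (0 : Fin 1).succ = 1 := rfl
      rw [hc, hsuc, h0] at hedge
      refine ⟨?_, rfl, ?_⟩
      · have : p.lab 0 = l := hlab
        rwa [this] at hedge
      · have : (Fin.last 1 : Fin 2) = 1 := rfl
        have hAt := hAttr (Fin.last 1)
        rw [hA] at hAt
        rwa [this] at hAt
    · intro a ha b hb hab
      dsimp only at hab; rw [dif_pos (show G.Matches p a from ha), dif_pos (show G.Matches p b from hb)] at hab
      exact (Prod.ext_iff.1 hab).1
  | succ n ih =>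
    intro p hlab hA
    set q := p.tail with hq
    have hqlab : q.lab (Fin.last n) = l := by
      have : (Fin.last n).succ = Fin.last (n + 1) := rfl
      simpa [hq, PathPattern.tail, this] using hlab
    have hqA : q.A (Fin.last (n + 1)) = S := by
      have : (Fin.last (n + 1)).succ = Fin.last (n + 2) := rfl
      simpa [hq, PathPattern.tail, this] using hA
    have step : (G.Vmatch p).ncard ≤
        {e : V × L × V | e ∈ G.E ∧ e.2.2 ∈ G.Vmatch q}.ncard := by
      refine Set.ncard_le_ncard_of_injOn
        (fun s => if h : G.Matches p s then (s, p.lab 0, h.choose 1) else (s, p.lab 0, s))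
        ?_ ?_ (Set.toFinite _)
      · intro s hs
        have h : G.Matches p s := hs
        simp only [dif_pos h]
        obtain ⟨h0, hE, hAttr⟩ := h.choose_spec
        have hedge := hE 0
        have hzc : (0 : Fin (n + 2)).castSucc = 0 := rfl
        have hzs : (0 : Fin (n + 2)).succ = 1 := rfl
        rw [hzc, hzs, h0] at hedge
        exact ⟨hedge, matches_tail hE hAttr⟩
      · intro a ha b hb hab
        dsimp only at hab; rw [dif_pos (show G.Matches p a from ha), dif_pos (show G.Matches p b from hb)] at hab
        exact (Prod.ext_iff.1 hab).1
    calc (G.Vmatch p).ncard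
        ≤ {e : V × L × V | e ∈ G.E ∧ e.2.2 ∈ G.Vmatch q}.ncard := step
      _ ≤ (G.Vmatch q).ncard * G.maxInDeg := card_edges_into_le G _
      _ ≤ ((G.edgesTo S l).ncard * G.maxInDeg ^ n) * G.maxInDeg :=
          Nat.mul_le_mul_right _ (ih q hqlab hqA)
      _ = (G.edgesTo S l).ncard * G.maxInDeg ^ (n + 1) := by ring

end Aux

open PropertyGraph in
/-- For a length-i pattern ending with ⟨ℓ, A⟩,
|V(p)| ≤ |E(A,ℓ)| · d_m^(i−1). -/
theorem bound_by_edgesTo {V L Att : Type} [Fintype V] [Fintype L] (G : PropertyGraph V L Att)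
    {i : ℕ} (hi : 1 ≤ i) (l : L) (S : Set Att) (hS : S.Nonempty)
    (p : PathPattern L Att i)
    (hlast_lab : p.lab ⟨i - 1, by omega⟩ = l)
    (hlast_A : p.A (Fin.last i) = S) :
    (G.Vmatch p).ncard ≤ (G.edgesTo S l).ncard * G.maxInDeg ^ (i - 1) := by
  obtain ⟨n, rfl⟩ : ∃ n, i = n + 1 := ⟨i - 1, by omega⟩
  simp only [Nat.add_sub_cancel] at *
  exact bound_aux G l S n p hlast_lab hlast_A
end

section
/- Let G be a finite property graph, let i ≥ 1, let ℓ be an edge label, let A be a nonempty attribute set, and let θ be a positive integer. If |E(A, ℓ)| · d_m^{i−1} < θ, where d_m is the maximum in-degree in G, then every simple path pattern p of length i whose last label equals ℓ and whose last attribute set equals A is infrequent, i.e., |V(p)| < θ. -/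
namespace PropertyGraph

variable {V L Att : Type}

lemma edges_into_le [Fintype V] [Fintype L] (G : PropertyGraph V L Att) (Q : Set V) :
    {e : V × L × V | e ∈ G.E ∧ e.2.2 ∈ Q}.ncard ≤ Q.ncard * G.maxInDeg := by
  classical
  have hsub : {e : V × L × V | e ∈ G.E ∧ e.2.2 ∈ Q}.toFinset ⊆
      Q.toFinset.biUnion (fun w => {e : V × L × V | e ∈ G.E ∧ e.2.2 = w}.toFinset) := by
    intro e he
    simp only [Set.mem_toFinset, Set.mem_setOf_eq] at he
    simp only [Finset.mem_biUnion, Set.mem_toFinset, Set.mem_setOf_eq]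
    exact ⟨e.2.2, he.2, he.1, rfl⟩
  have hdeg : ∀ w : V, {e : V × L × V | e ∈ G.E ∧ e.2.2 = w}.toFinset.card ≤ G.maxInDeg := by
    intro w
    have h1 : {e : V × L × V | e ∈ G.E ∧ e.2.2 = w}.toFinset.card = G.inDeg w := by
      rw [inDeg, Set.ncard_eq_toFinset_card']
    rw [h1]
    exact Finset.le_sup (Finset.mem_univ w)
  calc {e : V × L × V | e ∈ G.E ∧ e.2.2 ∈ Q}.ncard
      = {e : V × L × V | e ∈ G.E ∧ e.2.2 ∈ Q}.toFinset.card := Set.ncard_eq_toFinset_card' _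
    _ ≤ (Q.toFinset.biUnion (fun w => {e : V × L × V | e ∈ G.E ∧ e.2.2 = w}.toFinset)).card :=
        Finset.card_le_card hsub
    _ ≤ ∑ w ∈ Q.toFinset, {e : V × L × V | e ∈ G.E ∧ e.2.2 = w}.toFinset.card :=
        Finset.card_biUnion_le
    _ ≤ ∑ _w ∈ Q.toFinset, G.maxInDeg := Finset.sum_le_sum fun w _ => hdeg w
    _ = Q.ncard * G.maxInDeg := by
        rw [Finset.sum_const, smul_eq_mul, Set.ncard_eq_toFinset_card']

lemma key_bound [Fintype V] [Fintype L] (G : PropertyGraph V L Att) (S : Set Att) (l : L) :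
    ∀ n : ℕ, ∀ _hn : 1 ≤ n, ∀ lab : Fin n → L, lab ⟨n - 1, by omega⟩ = l →
    {s : V | ∃ v : Fin (n + 1) → V, v 0 = s ∧
        (∀ k : Fin n, (v k.castSucc, lab k, v k.succ) ∈ G.E) ∧
        S ⊆ G.attr (v (Fin.last n))}.ncard ≤
      (G.edgesTo S l).ncard * G.maxInDeg ^ (n - 1) := by
  intro n
  induction n with
  | zero => intro h; omega
  | succ m ih =>
    intro _ lab hlab
    rcases Nat.eq_zero_or_pos m with hm | hm
    · subst hm
      have hsub : {s : V | ∃ v : Fin 2 → V, v 0 = s ∧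
          (∀ k : Fin 1, (v k.castSucc, lab k, v k.succ) ∈ G.E) ∧
          S ⊆ G.attr (v (Fin.last 1))} ⊆ Prod.fst '' (G.edgesTo S l) := by
        rintro s ⟨v, rfl, hE, hA⟩
        have h01 : (⟨0 + 1 - 1, by omega⟩ : Fin 1) = 0 := rfl
        rw [h01] at hlab
        refine ⟨(v 0, l, v 1), ?_, rfl⟩
        have h0 := hE 0
        rw [hlab] at h0
        refine ⟨h0, rfl, ?_⟩
        have h11 : Fin.last 1 = 1 := rfl
        rw [h11] at hA
        exact hA
      calc _ ≤ (Prod.fst '' (G.edgesTo S l)).ncard :=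
            Set.ncard_le_ncard hsub (Set.toFinite _)
        _ ≤ (G.edgesTo S l).ncard := Set.ncard_image_le (Set.toFinite _)
        _ = (G.edgesTo S l).ncard * G.maxInDeg ^ (1 - 1) := by simp
    · -- m ≥ 1
      set lab' : Fin m → L := fun k => lab k.succ with hlab'
      have hlab'last : lab' ⟨m - 1, by omega⟩ = l := by
        show lab (Fin.succ ⟨m - 1, by omega⟩) = l
        have h2 : Fin.succ (⟨m - 1, by omega⟩ : Fin m) = (⟨m + 1 - 1, by omega⟩ : Fin (m + 1)) := by
          ext; simp; omega
        rw [h2]; exact hlab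
      set Q := {s : V | ∃ v : Fin (m + 1) → V, v 0 = s ∧
          (∀ k : Fin m, (v k.castSucc, lab' k, v k.succ) ∈ G.E) ∧
          S ⊆ G.attr (v (Fin.last m))} with hQ
      have hsub : {s : V | ∃ v : Fin (m + 1 + 1) → V, v 0 = s ∧
          (∀ k : Fin (m + 1), (v k.castSucc, lab k, v k.succ) ∈ G.E) ∧
          S ⊆ G.attr (v (Fin.last (m + 1)))} ⊆
          Prod.fst '' {e : V × L × V | e ∈ G.E ∧ e.2.2 ∈ Q} := by
        rintro s ⟨v, rfl, hE, hA⟩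
        refine ⟨(v 0, lab 0, v 1), ⟨?_, ?_⟩, rfl⟩
        · have h0 := hE 0
          simpa using h0
        · refine ⟨fun k => v k.succ, rfl, ?_, ?_⟩
          · intro k
            have h := hE k.succ
            have h1 : k.succ.castSucc = k.castSucc.succ := (Fin.succ_castSucc k).symm
            rw [h1] at h
            exact h
          · show S ⊆ G.attr (v (Fin.last m).succ)
            rw [Fin.succ_last]
            exact hA
      calc _ ≤ (Prod.fst '' {e : V × L × V | e ∈ G.E ∧ e.2.2 ∈ Q}).ncard :=
            Set.ncard_le_ncard hsub (Set.toFinite _)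
        _ ≤ {e : V × L × V | e ∈ G.E ∧ e.2.2 ∈ Q}.ncard :=
            Set.ncard_image_le (Set.toFinite _)
        _ ≤ Q.ncard * G.maxInDeg := G.edges_into_le Q
        _ ≤ ((G.edgesTo S l).ncard * G.maxInDeg ^ (m - 1)) * G.maxInDeg :=
            Nat.mul_le_mul_right _ (ih hm lab' hlab'last)
        _ = (G.edgesTo S l).ncard * G.maxInDeg ^ (m + 1 - 1) := by
            rw [mul_assoc, ← pow_succ]
            congr 2
            omega

end PropertyGraph

open PropertyGraph in
/-- If |E(A,ℓ)| · d_m^(i−1) < θ, then every length-i pattern ending with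
⟨ℓ, A⟩ is infrequent. -/
theorem prune_by_edgesTo {V L Att : Type} [Fintype V] [Fintype L] (G : PropertyGraph V L Att)
    {i : ℕ} (hi : 1 ≤ i) (l : L) (S : Set Att) (hS : S.Nonempty)
    (θ : ℕ) (hθ : 0 < θ)
    (hprune : (G.edgesTo S l).ncard * G.maxInDeg ^ (i - 1) < θ) :
    ∀ p : PathPattern L Att i,
      p.lab ⟨i - 1, by omega⟩ = l → p.A (Fin.last i) = S →
      (G.Vmatch p).ncard < θ := by
  intro p hlab hA
  have hsub : G.Vmatch p ⊆ {s : V | ∃ v : Fin (i + 1) → V, v 0 = s ∧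
      (∀ k : Fin i, (v k.castSucc, p.lab k, v k.succ) ∈ G.E) ∧
      S ⊆ G.attr (v (Fin.last i))} := by
    rintro s ⟨v, rfl, hE, hAll⟩
    exact ⟨v, rfl, hE, by rw [← hA]; exact hAll (Fin.last i)⟩
  calc (G.Vmatch p).ncard
      ≤ _ := Set.ncard_le_ncard hsub (Set.toFinite _)
    _ ≤ (G.edgesTo S l).ncard * G.maxInDeg ^ (i - 1) := G.key_bound S l i hi p.lab hlab
    _ < θ := hprune
end

section
/- Let G be a finite property graph, let ℓ be an edge label, and let A be a nonempty attribute set. Let p = ⟨A₀, ℓ₀, …, ℓ_{n−1}, A_n⟩ be a simple path pattern of length n and let 1 ≤ i ≤ n be an index such that A_{i−1} = A and ℓ_{i−1} = ℓ (i.e., p has the form ⟨…, ℓ_{i−2}, A, ℓ, A_i, …⟩). Then the number of vertices matching p satisfies |V(p)| ≤ |V(A, ℓ)| · d_m^{i−1}, where d_m is the maximum in-degree in G. -/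
theorem ncard_le_ncard_image_mul' {α β : Type*} [Fintype α] (s : Set α) (f : α → β) (n : ℕ)
    (h : ∀ b, (s ∩ f ⁻¹' {b}).ncard ≤ n) : s.ncard ≤ (f '' s).ncard * n := by
  classical
  rw [Set.ncard_eq_toFinset_card' s, Set.ncard_eq_toFinset_card' (f '' s)]
  have him : s.toFinset.image f = (f '' s).toFinset := by ext b; simp [Set.mem_image]
  have := Finset.card_le_mul_card_image (f := f) s.toFinset n ?_
  · rw [him, Nat.mul_comm] at this; exact this
  · intro b hb
    have heq : ({a ∈ s.toFinset | f a = b} : Finset α) = (s ∩ f ⁻¹' {b}).toFinset := by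
      ext a; simp [Set.mem_inter_iff]
    rw [heq, ← Set.ncard_eq_toFinset_card']; exact h b

theorem walk_bound' {V L Att : Type} [Fintype V] [Fintype L] (G : PropertyGraph V L Att) :
    ∀ (k : ℕ) (T : Set V) (lb : Fin k → L),
      {f : Fin (k+1) → V | f (Fin.last k) ∈ T ∧
        ∀ j : Fin k, (f j.castSucc, lb j, f j.succ) ∈ G.E}.ncard
        ≤ T.ncard * G.maxInDeg ^ k := by
  intro k
  induction k with
  | zero =>
    intro T lb
    simp only [pow_zero, mul_one]
    apply Set.ncard_le_ncard_of_injOn (fun f => f (Fin.last 0))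
    · intro f hf; exact hf.1
    · intro f hf g hg hfg
      funext j
      have : j = Fin.last 0 := Fin.ext (by omega)
      rw [this]; exact hfg
  | succ k ih =>
    intro T lb
    set W := {f : Fin (k+1+1) → V | f (Fin.last (k+1)) ∈ T ∧
        ∀ j : Fin (k+1), (f j.castSucc, lb j, f j.succ) ∈ G.E} with hW
    set Φ : (Fin (k+1+1) → V) → (Fin (k+1) → V) := fun f => f ∘ Fin.succ with hΦ
    have h1 : W.ncard ≤ (Φ '' W).ncard * G.maxInDeg := by
      apply ncard_le_ncard_image_mul'
      intro g
      have hfib : (W ∩ Φ ⁻¹' {g}).ncard ≤ G.inDeg (g 0) := by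
        apply Set.ncard_le_ncard_of_injOn (fun f => (f 0, lb 0, g 0))
        · rintro f ⟨hfW, hfg⟩
          have hg : Φ f = g := hfg
          have he := hfW.2 0
          have h10 : f (Fin.succ 0) = g 0 := by rw [← hg]; rfl
          refine ⟨?_, rfl⟩
          rw [← h10]
          exact he
        · rintro f ⟨hfW, hfg⟩ f' ⟨hfW', hfg'⟩ heq
          have hg : Φ f = g := hfg
          have hg' : Φ f' = g := hfg'
          have h0 : f 0 = f' 0 := congrArg (fun e => e.1) heq
          funext j
          cases j using Fin.cases with
          | zero => exact h0
          | succ m =>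
            have : f (Fin.succ m) = (Φ f) m := rfl
            rw [this, hg]
            have : f' (Fin.succ m) = (Φ f') m := rfl
            rw [this, hg']
      exact hfib.trans (Finset.le_sup (Finset.mem_univ (g 0)))
    have h2 : Φ '' W ⊆ {f : Fin (k+1) → V | f (Fin.last k) ∈ T ∧
        ∀ j : Fin k, (f j.castSucc, (fun j : Fin k => lb j.succ) j, f j.succ) ∈ G.E} := by
      rintro g ⟨f, ⟨hT, hE⟩, rfl⟩
      constructor
      · have : (Φ f) (Fin.last k) = f (Fin.last (k+1)) := rfl
        rw [this]; exact hT
      · intro j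
        have he := hE j.succ
        have e1 : (Φ f) j.castSucc = f (Fin.succ j.castSucc) := rfl
        have e2 : (Φ f) j.succ = f (Fin.succ j.succ) := rfl
        rw [e1, e2, Fin.succ_castSucc]
        exact he
    calc W.ncard ≤ (Φ '' W).ncard * G.maxInDeg := h1
      _ ≤ (T.ncard * G.maxInDeg ^ k) * G.maxInDeg := by
          apply Nat.mul_le_mul_right
          exact le_trans (Set.ncard_le_ncard h2 (Set.toFinite _)) (ih T _)
      _ = T.ncard * G.maxInDeg ^ (k+1) := by ring

open PropertyGraph in
/-- For a pattern of the form ⟨…, ℓ_{i−2}, A, ℓ, A_i, …⟩ with 1 ≤ i ≤ n,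
|V(p)| ≤ |V(A,ℓ)| · d_m^(i−1). -/
theorem bound_by_srcVerts {V L Att : Type} [Fintype V] [Fintype L] (G : PropertyGraph V L Att)
    {n i : ℕ} (hi1 : 1 ≤ i) (hin : i ≤ n)
    (l : L) (S : Set Att) (hS : S.Nonempty)
    (p : PathPattern L Att n)
    (hA : p.A ⟨i - 1, by omega⟩ = S)
    (hlab : p.lab ⟨i - 1, by omega⟩ = l) :
    (G.Vmatch p).ncard ≤ (G.srcVerts S l).ncard * G.maxInDeg ^ (i - 1) := by
  classical
  obtain ⟨k, rfl⟩ : ∃ k, i = k + 1 := ⟨i - 1, by omega⟩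
  have hkn : k + 1 ≤ n := hin
  -- the comparison walk set
  set lb : Fin k → L := fun j => p.lab ⟨j.val, by omega⟩ with hlb
  set T : Set V := G.srcVerts S l with hT
  set Wk := {f : Fin (k+1) → V | f (Fin.last k) ∈ T ∧
      ∀ j : Fin k, (f j.castSucc, lb j, f j.succ) ∈ G.E} with hWk
  have hmain : (G.Vmatch p).ncard ≤ Wk.ncard := by
    set φ : V → (Fin (k+1) → V) := fun s =>
      if h : G.Matches p s then (fun j => Classical.choose h ⟨j.val, by omega⟩)
      else fun _ => s with hφ
    apply Set.ncard_le_ncard_of_injOn φ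
    · intro s hs
      have h : G.Matches p s := hs
      have hφs : φ s = fun j : Fin (k+1) => Classical.choose h ⟨j.val, by omega⟩ := by
        simp only [hφ, dif_pos h]
      obtain ⟨hv0, hE, hattr⟩ := Classical.choose_spec h
      set v := Classical.choose h with hv
      rw [hφs]
      constructor
      · -- v ⟨k, _⟩ ∈ srcVerts S l
        show v ⟨(Fin.last k).val, by omega⟩ ∈ T
        have hval : ((⟨(Fin.last k).val, by omega⟩ : Fin (n+1))) = ⟨k, by omega⟩ :=
          Fin.ext (by simp [Fin.last])
        rw [hval]
        constructor
        · have hAk : p.A ⟨k, by omega⟩ = S := by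
            rw [← hA]; congr 1
          rw [← hAk]
          exact hattr ⟨k, by omega⟩
        · refine ⟨v (Fin.succ ⟨k, by omega⟩), ?_⟩
          have he := hE ⟨k, by omega⟩
          have hlk : p.lab ⟨k, by omega⟩ = l := by rw [← hlab]; exact congrArg p.lab (Fin.ext rfl)
          have hc : Fin.castSucc (⟨k, by omega⟩ : Fin n) = (⟨k, by omega⟩ : Fin (n+1)) :=
            Fin.ext rfl
          rw [hlk, hc] at he
          exact he
      · intro j
        have he := hE ⟨j.val, by omega⟩
        have hc : Fin.castSucc (⟨j.val, by omega⟩ : Fin n)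
            = (⟨(j.castSucc).val, by omega⟩ : Fin (n+1)) := Fin.ext rfl
        have hsc : Fin.succ (⟨j.val, by omega⟩ : Fin n)
            = (⟨(j.succ).val, by omega⟩ : Fin (n+1)) := Fin.ext rfl
        have hlj : p.lab ⟨j.val, by omega⟩ = lb j := rfl
        rw [hc, hsc, hlj] at he
        exact he
    · intro s hs t ht heq
      have hseq : ∀ u (hu : u ∈ G.Vmatch p), φ u 0 = u := by
        intro u hu
        have h : G.Matches p u := hu
        have hφu : φ u = fun j : Fin (k+1) => Classical.choose h ⟨j.val, by omega⟩ := by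
          simp only [hφ, dif_pos h]
        obtain ⟨hv0, _, _⟩ := Classical.choose_spec h
        rw [hφu]
        show Classical.choose h ⟨0, by omega⟩ = u
        have h00 : ((⟨0, by omega⟩ : Fin (n+1))) = 0 := Fin.ext (by simp)
        rw [h00]
        exact hv0
      rw [← hseq s hs, ← hseq t ht, heq]
  exact hmain.trans (walk_bound' G k T lb)
end

section
/- Let G be a finite property graph, let ℓ be an edge label, let A be a nonempty attribute set, let 1 ≤ i, and let θ be a positive integer. If |V(A, ℓ)| · d_m^{i−1} < θ, where d_m is the maximum in-degree in G, then every simple path pattern p of length n ≥ i whose (i−1)-th attribute set equals A and whose (i−1)-th label equals ℓ is infrequent, i.e., |V(p)| < θ. -/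
namespace PruneAux

open PropertyGraph

variable {V L Att : Type}

/-- Set of vertices from which `w` is reachable by a path of length `k` (labels arbitrary). -/
def reachB (G : PropertyGraph V L Att) : ℕ → V → Set V
  | 0, w => {w}
  | (k+1), w => ⋃ e ∈ {e ∈ G.E | e.2.2 = w}, reachB G k e.1

lemma ncard_biUnion_le {α β : Type} [Fintype β] (T : Set α) (hT : T.Finite)
    (f : α → Set β) (m : ℕ) (h : ∀ a ∈ T, (f a).ncard ≤ m) :
    (⋃ a ∈ T, f a).ncard ≤ T.ncard * m := by
  revert h
  refine Set.Finite.induction_on (motive := fun T _ => (∀ a ∈ T, (f a).ncard ≤ m) →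
      (⋃ a ∈ T, f a).ncard ≤ T.ncard * m) T hT (by simp) ?_
  intro a T ha hT ih h
  rw [Set.biUnion_insert]
  calc ((f a) ∪ ⋃ x ∈ T, f x).ncard ≤ (f a).ncard + (⋃ x ∈ T, f x).ncard :=
        Set.ncard_union_le _ _
    _ ≤ m + T.ncard * m := by
        gcongr
        · exact h a (Set.mem_insert a T)
        · exact ih fun b hb => h b (Set.mem_insert_of_mem a hb)
    _ = (insert a T).ncard * m := by
        rw [Set.ncard_insert_of_notMem ha hT, add_mul, one_mul, add_comm]

lemma reachB_ncard_le [Fintype V] [Fintype L] (G : PropertyGraph V L Att) (k : ℕ) (w : V) :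
    (reachB G k w).ncard ≤ G.maxInDeg ^ k := by
  induction k generalizing w with
  | zero => simp [reachB]
  | succ k ih =>
    have h1 : ({e ∈ G.E | e.2.2 = w} : Set (V × L × V)).ncard ≤ G.maxInDeg := by
      have : G.inDeg w ≤ G.maxInDeg := Finset.le_sup (Finset.mem_univ w)
      simpa [PropertyGraph.inDeg] using this
    calc (reachB G (k+1) w).ncard ≤ ({e ∈ G.E | e.2.2 = w} : Set (V × L × V)).ncard * G.maxInDeg ^ k := by
          exact ncard_biUnion_le _ (Set.toFinite _) _ _ (fun e _ => ih e.1)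
      _ ≤ G.maxInDeg * G.maxInDeg ^ k := by gcongr
      _ = G.maxInDeg ^ (k+1) := (pow_succ' _ _).symm

lemma mem_reachB (G : PropertyGraph V L Att) (k : ℕ) (f : Fin (k+1) → V)
    (hf : ∀ j : Fin k, ∃ l', (f j.castSucc, l', f j.succ) ∈ G.E) :
    f 0 ∈ reachB G k (f (Fin.last k)) := by
  induction k with
  | zero => simp [reachB, Fin.last]
  | succ k ih =>
    obtain ⟨l', he⟩ := hf (Fin.last k)
    have hlast : (Fin.last k).succ = Fin.last (k+1) := by
      ext; simp [Fin.last]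
    rw [hlast] at he
    simp only [reachB, Set.mem_iUnion]
    refine ⟨(f (Fin.last k).castSucc, l', f (Fin.last (k+1))), ⟨he, rfl⟩, ?_⟩
    have h0 : (f ∘ Fin.castSucc) 0 = f 0 := by simp
    have hL : (f ∘ Fin.castSucc) (Fin.last k) = f (Fin.last k).castSucc := rfl
    rw [← h0, ← hL]
    exact ih (f ∘ Fin.castSucc) (fun j => by
      obtain ⟨l'', he'⟩ := hf j.castSucc
      exact ⟨l'', by
        show (f j.castSucc.castSucc, l'', f j.succ.castSucc) ∈ G.E
        rw [← Fin.succ_castSucc]; exact he'⟩)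

end PruneAux

open PropertyGraph in
/-- If |V(A,ℓ)| · d_m^(i−1) < θ, then every pattern of length n ≥ i whose
(i−1)-th attribute set equals A and whose (i−1)-th label equals ℓ is infrequent. -/
theorem prune_by_srcVerts {V L Att : Type} [Fintype V] [Fintype L] (G : PropertyGraph V L Att)
    {i : ℕ} (hi : 1 ≤ i) (l : L) (S : Set Att) (hS : S.Nonempty)
    (θ : ℕ) (hθ : 0 < θ)
    (hprune : (G.srcVerts S l).ncard * G.maxInDeg ^ (i - 1) < θ) :
    ∀ n : ℕ, ∀ hin : i ≤ n, ∀ p : PathPattern L Att n,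
      p.A ⟨i - 1, by omega⟩ = S → p.lab ⟨i - 1, by omega⟩ = l →
      (G.Vmatch p).ncard < θ := by
  intro n hin p hA hl
  classical
  set k := i - 1 with hk
  have hkn : k < n := by omega
  -- Vmatch p is contained in the union of backward-reach sets from srcVerts
  have hsub : G.Vmatch p ⊆ ⋃ w ∈ G.srcVerts S l, PruneAux.reachB G k w := by
    rintro s ⟨v, hv0, hedges, hattr⟩
    set w : V := v ⟨k, by omega⟩ with hw
    have hwmem : w ∈ G.srcVerts S l := by
      refine ⟨?_, ⟨v (⟨k, hkn⟩ : Fin n).succ, ?_⟩⟩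
      · rw [← hA]
        have := hattr ⟨k, by omega⟩
        exact this
      · have := hedges ⟨k, hkn⟩
        rw [hl] at this
        convert this using 2
        rfl
    refine Set.mem_biUnion hwmem ?_
    have hf : ∀ j : Fin k, ∃ l', ((fun j : Fin (k+1) => v ⟨j.val, by omega⟩) j.castSucc, l',
        (fun j : Fin (k+1) => v ⟨j.val, by omega⟩) j.succ) ∈ G.E := by
      intro j
      refine ⟨p.lab ⟨j.val, by omega⟩, ?_⟩
      have := hedges ⟨j.val, by omega⟩
      convert this using 2
      all_goals rfl
    have hmem := PruneAux.mem_reachB G k (fun j : Fin (k+1) => v ⟨j.val, by omega⟩) hf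
    simp only [Fin.last] at hmem
    rw [← hv0]
    exact hmem
  calc (G.Vmatch p).ncard ≤ (⋃ w ∈ G.srcVerts S l, PruneAux.reachB G k w).ncard :=
        Set.ncard_le_ncard hsub (Set.toFinite _)
    _ ≤ (G.srcVerts S l).ncard * G.maxInDeg ^ k :=
        PruneAux.ncard_biUnion_le _ (Set.toFinite _) _ _
          (fun w _ => PruneAux.reachB_ncard_le G k w)
    _ < θ := hprune
end

section
/- Let p_X, p_Y, p_X′, p_Y′ be simple path patterns in a property graph G such that p_X′ dominates p_X and p_Y′ dominates p_Y. Then V(p_X′) ∩ V(p_Y′) ⊆ V(p_X) ∩ V(p_Y); consequently the absolute support of path association rules is anti-monotone under dominance: ASupp(p_X′ ⇒ p_Y′) ≤ ASupp(p_X ⇒ p_Y), and for any positive integer θ, if ASupp(p_X ⇒ p_Y) < θ then ASupp(p_X′ ⇒ p_Y′) < θ. -/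
open PropertyGraph in
lemma vmatch_subset_of_dominates {V L Att : Type} (G : PropertyGraph V L Att)
    {m n : ℕ} (h : m ≤ n) (p : PathPattern L Att m) (p' : PathPattern L Att n)
    (hlab : ∀ i : Fin m, p.lab i = p'.lab (Fin.castLE h i))
    (hA : ∀ i : Fin (m + 1), p.A i ⊆ p'.A (Fin.castLE (Nat.succ_le_succ h) i)) :
    G.Vmatch p' ⊆ G.Vmatch p := by
  rintro s ⟨v, hv0, hE, hAttr⟩
  refine ⟨fun i => v (Fin.castLE (Nat.succ_le_succ h) i), ?_, ?_, ?_⟩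
  · simpa using hv0
  · intro i
    have := hE (Fin.castLE h i)
    rw [hlab i]
    convert this using 4 <;> ext <;> simp [Fin.castSucc, Fin.succ]
  · intro i
    exact (hA i).trans (hAttr _)

open PropertyGraph in
/-- If p_X' dominates p_X and p_Y' dominates p_Y, then
V(p_X') ∩ V(p_Y') ⊆ V(p_X) ∩ V(p_Y); hence the absolute support of path association rules
is anti-monotone under dominance. -/
theorem rule_support_antimonotone {V L Att : Type} [Fintype V] (G : PropertyGraph V L Att)
    {mX nX mY nY : ℕ} (hX : mX ≤ nX) (hY : mY ≤ nY)
    (pX : PathPattern L Att mX) (pX' : PathPattern L Att nX)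
    (pY : PathPattern L Att mY) (pY' : PathPattern L Att nY)
    (hlabX : ∀ i : Fin mX, pX.lab i = pX'.lab (Fin.castLE hX i))
    (hAX : ∀ i : Fin (mX + 1), pX.A i ⊆ pX'.A (Fin.castLE (Nat.succ_le_succ hX) i))
    (hlabY : ∀ i : Fin mY, pY.lab i = pY'.lab (Fin.castLE hY i))
    (hAY : ∀ i : Fin (mY + 1), pY.A i ⊆ pY'.A (Fin.castLE (Nat.succ_le_succ hY) i)) :
    (G.Vmatch pX' ∩ G.Vmatch pY') ⊆ (G.Vmatch pX ∩ G.Vmatch pY) ∧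
    (G.Vmatch pX' ∩ G.Vmatch pY').ncard ≤ (G.Vmatch pX ∩ G.Vmatch pY).ncard ∧
    ∀ θ : ℕ, 0 < θ → (G.Vmatch pX ∩ G.Vmatch pY).ncard < θ →
      (G.Vmatch pX' ∩ G.Vmatch pY').ncard < θ := by
  have hsub : (G.Vmatch pX' ∩ G.Vmatch pY') ⊆ (G.Vmatch pX ∩ G.Vmatch pY) :=
    Set.inter_subset_inter (vmatch_subset_of_dominates G hX pX pX' hlabX hAX)
      (vmatch_subset_of_dominates G hY pY pY' hlabY hAY)
  have hcard := Set.ncard_le_ncard hsub (Set.toFinite _)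
  exact ⟨hsub, hcard, fun θ _ hθ => lt_of_le_of_lt hcard hθ⟩
end
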